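/- Let M be a minimal node multicut of (G,B), C' a component of G − M' for another minimal node multicut M', and C = μ(C',M) the component of G − M closest to C'. Suppose v ∈ N(C) ∩ C' ⊆ M is such that the induced subgraph G[N[v] ∪ C] contains no terminal pair of B, and let T_v = N(v) ∩ T. Then M'' = (M \ {v}) ∪ (N(T_v ∪ {v}) \ C) is a node multicut of (G,B). -/

import Mathlib

open SimpleGraph Set

variable {V : Type*}

/-- The set of terminals occurring in a set `B` of terminal pairs. -/
def terminalSet (B : Set (V × V)) : Set V := {v | ∃ p ∈ B, v = p.1 ∨ v = p.2}

/-- `s` and `t` are separated in `G - M` (the graph obtained by deleting the vertices of `M`). -/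
def SepSets (G : SimpleGraph V) (M : Set V) (s t : V) : Prop :=
  ∀ (hs : s ∈ (Mᶜ : Set V)) (ht : t ∈ (Mᶜ : Set V)),
    ¬ (G.induce (Mᶜ : Set V)).Reachable ⟨s, hs⟩ ⟨t, ht⟩

/-- `M` is a node multicut of `(G, B)`. -/
def IsNodeMulticut (G : SimpleGraph V) (B : Set (V × V)) (M : Set V) : Prop :=
  M ⊆ (terminalSet B)ᶜ ∧ ∀ p ∈ B, SepSets G M p.1 p.2

/-- `M` is a minimal node multicut of `(G, B)`. -/
def IsMinNodeMulticut (G : SimpleGraph V) (B : Set (V × V)) (M : Set V) : Prop :=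
  IsNodeMulticut G B M ∧ ∀ M' ⊂ M, ¬ IsNodeMulticut G B M'

/-- `C` is (the vertex set of) a connected component of `G - M`. -/
def IsCompOf (G : SimpleGraph V) (M : Set V) (C : Set V) : Prop :=
  ∃ c : (G.induce (Mᶜ : Set V)).ConnectedComponent, C = Subtype.val '' c.supp

private lemma walk_reachable_induce {G : SimpleGraph V} {s : Set V} :
    ∀ {a b : V} (p : G.Walk a b), (∀ x ∈ p.support, x ∈ s) →
      ∀ (ha : a ∈ s) (hb : b ∈ s), (G.induce s).Reachable ⟨a, ha⟩ ⟨b, hb⟩ := by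
  intro a b p
  induction p with
  | nil => intro _ ha hb; exact Reachable.refl _
  | @cons a w b h q ih =>
    intro hs ha hb
    have hw : w ∈ s := hs w (by simp [Walk.support_cons])
    have hadj : (G.induce s).Adj ⟨a, ha⟩ ⟨w, hw⟩ := h
    exact (hadj.reachable).trans
      (ih (fun x hx => hs x (by simp [Walk.support_cons, hx])) hw hb)

private lemma induce_reachable_walk {G : SimpleGraph V} {s : Set V} {a b : V}
    (ha : a ∈ s) (hb : b ∈ s)
    (h : (G.induce s).Reachable ⟨a, ha⟩ ⟨b, hb⟩) :
    ∃ p : G.Walk a b, ∀ x ∈ p.support, x ∈ s := by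
  obtain ⟨q⟩ := h
  refine ⟨q.map (SimpleGraph.Embedding.induce s).toHom, ?_⟩
  intro x hx0
  have hx : x ∈ (q.map (SimpleGraph.Embedding.induce s).toHom).support := hx0
  rw [Walk.support_map] at hx
  obtain ⟨y, _, rfl⟩ := List.mem_map.mp hx
  exact y.2

/-- A walk avoiding `M` starting in a component `C` of `G - M` ends in `C`. -/
private lemma comp_closed {G : SimpleGraph V} {M C : Set V} (hC : IsCompOf G M C)
    {x t : V} (hx : x ∈ C) (p : G.Walk x t) (hp : ∀ y ∈ p.support, y ∉ M) : t ∈ C := by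
  obtain ⟨c, rfl⟩ := hC
  obtain ⟨x', hx', hval⟩ := hx
  have hxM : x ∈ (Mᶜ : Set V) := hval ▸ x'.2
  have htM : t ∈ (Mᶜ : Set V) := hp t p.end_mem_support
  have hre : (G.induce (Mᶜ : Set V)).Reachable ⟨x, hxM⟩ ⟨t, htM⟩ :=
    walk_reachable_induce p hp hxM htM
  refine ⟨⟨t, htM⟩, ?_, rfl⟩
  rw [ConnectedComponent.mem_supp_iff] at hx' ⊢
  have : (⟨x, hxM⟩ : (Mᶜ : Set V)) = x' := Subtype.ext hval.symm
  rw [← hx', ← this]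
  exact (ConnectedComponent.eq.mpr hre).symm

theorem push_vertex_is_multicut [Fintype V] (G : SimpleGraph V) (B : Set (V × V))
    (M M' C' C : Set V) (v : V)
    (hnoadjT : ∀ a ∈ terminalSet B, ∀ b ∈ terminalSet B, ¬ G.Adj a b)
    (hnopairN : ∀ w : V, ¬ ∃ p ∈ B, G.Adj w p.1 ∧ G.Adj w p.2)
    (hM : IsMinNodeMulticut G B M) (hM' : IsMinNodeMulticut G B M')
    (hC'comp : IsCompOf G M' C') (hC'term : (C' ∩ terminalSet B).Nonempty)
    (hCcomp : IsCompOf G M C)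
    (hCmin : ∀ D : Set V, IsCompOf G M D → (C' \ C).ncard ≤ (C' \ D).ncard)
    (hvC' : v ∈ C') (hvnC : v ∉ C) (hvN : ∃ u ∈ C, G.Adj v u)
    (hnoterm : ∀ p ∈ B,
      ¬ (p.1 ∈ insert v {u | G.Adj v u} ∪ C ∧ p.2 ∈ insert v {u | G.Adj v u} ∪ C)) :
    IsNodeMulticut G B ((M \ {v}) ∪
      ({w | w ∉ insert v {u | G.Adj v u ∧ u ∈ terminalSet B} ∧
            ∃ u ∈ insert v {u | G.Adj v u ∧ u ∈ terminalSet B}, G.Adj u w} \ C)) := by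
  classical
  set S : Set V := insert v {u | G.Adj v u ∧ u ∈ terminalSet B} with hS
  set M2 : Set V := (M \ {v}) ∪ ({w | w ∉ S ∧ ∃ u ∈ S, G.Adj u w} \ C) with hM2
  -- a vertex adjacent to something in S, not in M2, is in S or C
  have keyF : ∀ u ∈ S, ∀ w, G.Adj u w → w ∉ M2 → w ∈ S ∪ C := by
    intro u hu w hadj hw
    by_contra hcon
    rw [Set.mem_union] at hcon
    push_neg at hcon
    exact hw (Or.inr ⟨⟨hcon.1, u, hu, hadj⟩, hcon.2⟩)
  -- M ⊆ M2 ∪ {v}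
  have hMsub : ∀ y, y ∉ M2 → y ≠ v → y ∉ M := by
    intro y hy hne hyM
    exact hy (Or.inl ⟨hyM, hne⟩)
  -- tails: a path from v avoiding M2 ends in N[v] ∪ C
  have tail : ∀ (t : V) (Q : G.Walk v t), Q.IsPath → (∀ y ∈ Q.support, y ∉ M2) →
      t ∈ insert v {u | G.Adj v u} ∪ C := by
    intro t Q hQp hQs
    cases Q with
    | nil => exact Or.inl (Set.mem_insert _ _)
    | @cons _ w _ hadj Q' =>
      rw [Walk.cons_isPath_iff] at hQp
      obtain ⟨hQ'p, hvQ'⟩ := hQp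
      have hw : w ∉ M2 := hQs w (by simp [Walk.support_cons])
      have hQ's : ∀ y ∈ Q'.support, y ∉ M2 :=
        fun y hy => hQs y (by simp [Walk.support_cons, hy])
      have hwSC : w ∈ S ∪ C := keyF v (Set.mem_insert _ _) w hadj hw
      rcases hwSC with hwS | hwC
      · -- w ∈ S : w ≠ v so w is a terminal adjacent to v
        have hwv : w ≠ v := fun h => G.irrefl (h ▸ hadj)
        have hwT : G.Adj v w ∧ w ∈ terminalSet B := by
          rcases hwS with h | h
          · exact absurd h hwv
          · exact h
        cases Q' with
        | nil => exact Or.inl (Set.mem_insert_of_mem _ hwT.1)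
        | @cons _ x _ hadj2 Q'' =>
          rw [Walk.cons_isPath_iff] at hQ'p
          obtain ⟨hQ''p, hwQ''⟩ := hQ'p
          have hx : x ∉ M2 := hQ's x (by simp [Walk.support_cons])
          have hxv : x ≠ v := fun h => hvQ' (h ▸ (by simp [Walk.support_cons]))
          have hxSC : x ∈ S ∪ C := keyF w (Or.inr hwT) x hadj2 hx
          have hxC : x ∈ C := by
            rcases hxSC with hxS | hxC
            · rcases hxS with h | h
              · exact absurd h hxv
              · exact absurd hadj2 (hnoadjT w hwT.2 x h.2)
            · exact hxC
          refine Or.inr (comp_closed hCcomp hxC Q'' ?_)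
          intro y hy
          have hy1 : y ∈ (Walk.cons hadj2 Q'').support := by
            simp [Walk.support_cons, hy]
          exact hMsub y (hQ's y hy1) (fun h => hvQ' (h ▸ hy1))
      · -- w ∈ C
        refine Or.inr (comp_closed hCcomp hwC Q' ?_)
        intro y hy
        exact hMsub y (hQ's y hy) (fun h => hvQ' (h ▸ hy))
  constructor
  · -- M2 contains no terminals
    intro w hw
    rcases hw with ⟨hwM, _⟩ | ⟨⟨hwS, u, hu, hadj⟩, _⟩
    · exact hM.1.1 hwM
    · intro hwT
      rcases hu with rfl | hu
      · exact hwS (Or.inr ⟨hadj, hwT⟩)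
      · exact hnoadjT u hu.2 w hwT hadj
  · -- separation
    rintro p hp hs ht hre
    obtain ⟨W0, hW0⟩ := induce_reachable_walk hs ht hre
    set W := W0.bypass with hW
    have hWp : W.IsPath := W0.bypass_isPath
    have hWs : ∀ y ∈ W.support, y ∉ M2 :=
      fun y hy => hW0 y (W0.support_bypass_subset hy)
    have hsT : p.1 ∈ terminalSet B := ⟨p, hp, Or.inl rfl⟩
    have htT : p.2 ∈ terminalSet B := ⟨p, hp, Or.inr rfl⟩
    by_cases hv : v ∈ W.support
    · -- split at v
      have hWs2 : ∀ y ∈ (W.dropUntil v hv).support, y ∉ M2 :=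
        fun y hy => hWs y (W.support_dropUntil_subset hv hy)
      have ht2 : p.2 ∈ insert v {u | G.Adj v u} ∪ C :=
        tail p.2 (W.dropUntil v hv) (hWp.dropUntil hv) hWs2
      have hWs1 : ∀ y ∈ (W.takeUntil v hv).reverse.support, y ∉ M2 := by
        intro y hy
        rw [Walk.support_reverse, List.mem_reverse] at hy
        exact hWs y (W.support_takeUntil_subset hv hy)
      have hs2 : p.1 ∈ insert v {u | G.Adj v u} ∪ C :=
        tail p.1 (W.takeUntil v hv).reverse ((hWp.takeUntil hv).reverse) hWs1
      exact hnoterm p hp ⟨hs2, ht2⟩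
    · -- W avoids M entirely: contradicts M being a multicut
      have hWM : ∀ y ∈ W.support, y ∉ M :=
        fun y hy => hMsub y (hWs y hy) (fun h => hv (h ▸ hy))
      have hsM : p.1 ∈ (Mᶜ : Set V) := fun h => hM.1.1 h hsT
      have htM : p.2 ∈ (Mᶜ : Set V) := fun h => hM.1.1 h htT
      exact hM.1.2 p hp hsM htM (walk_reachable_induce W hWM hsM htM)
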